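/- Let G be a compact connected Lie group acting symplectically on (M, ω), and suppose the restriction of the action to every maximal torus of G admits a momentum map. Then the G-action admits a momentum map (and, after averaging, an equivariant one), i.e., the action is Hamiltonian. -/

import Mathlib

/-- Let a compact connected Lie group `G` act symplectically on
`(M, ω)` and suppose the restriction of the action to every maximal torus admits a
momentum map.  Then the `G`-action admits a momentum map, and (after averaging)
an equivariant one, i.e. the action is Hamiltonian.  The Lie algebras of the
maximal tori are modelled by a family `t : ι → Submodule ℝ 𝔤` covering `𝔤`
(every element of a compact connected group lies in a maximal torus); `hHam` is
the momentum map for each torus; `coAd` is the coadjoint action; `havg` encodes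
the averaging theorem for compact groups (any momentum map can be averaged to an
equivariant one). -/
theorem stmt18 {𝔤 M Ω G : Type*} [AddCommGroup 𝔤] [Module ℝ 𝔤]
    [FiniteDimensional ℝ 𝔤]
    [AddCommGroup Ω] [Module ℝ Ω] [Group G] [MulAction G M]
    (d : (M → ℝ) →ₗ[ℝ] Ω) (iω : 𝔤 →ₗ[ℝ] Ω)
    {ι : Type*} (t : ι → Submodule ℝ 𝔤)
    (hcover : ∀ ξ : 𝔤, ∃ i, ξ ∈ t i)
    (hHam : ∀ i, ∃ μ : M → Module.Dual ℝ (t i),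
      ∀ ξ : (t i), iω ξ = d (fun x => μ x ξ))
    (coAd : G → Module.Dual ℝ 𝔤 → Module.Dual ℝ 𝔤)
    (havg : ∀ μ : M → Module.Dual ℝ 𝔤, (∀ ξ : 𝔤, iω ξ = d (fun x => μ x ξ)) →
      ∃ μ' : M → Module.Dual ℝ 𝔤, (∀ ξ : 𝔤, iω ξ = d (fun x => μ' x ξ)) ∧
        ∀ (g : G) (x : M), μ' (g • x) = coAd g (μ' x)) :
    ∃ μ : M → Module.Dual ℝ 𝔤, (∀ ξ : 𝔤, iω ξ = d (fun x => μ x ξ)) ∧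
      ∀ (g : G) (x : M), μ (g • x) = coAd g (μ x) := by
  have hexact : ∀ ξ : 𝔤, ∃ f : M → ℝ, iω ξ = d f := by
    intro ξ
    obtain ⟨i, hi⟩ := hcover ξ
    obtain ⟨μ, hμ⟩ := hHam i
    exact ⟨fun x => μ x ⟨ξ, hi⟩, hμ ⟨ξ, hi⟩⟩
  choose f hf using hexact
  let b := Module.finBasis ℝ 𝔤
  set μ0 : M → Module.Dual ℝ 𝔤 := fun x => ∑ j, f (b j) x • (b.coord j) with hμ0
  have key : ∀ ξ : 𝔤, iω ξ = d (fun x => μ0 x ξ) := by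
    intro ξ
    have h1 : (fun x => μ0 x ξ) = ∑ j, b.coord j ξ • f (b j) := by
      funext x
      simp [μ0, Finset.sum_apply, mul_comm]
    rw [h1, map_sum]
    have h2 : iω ξ = ∑ j, b.coord j ξ • iω (b j) := by
      conv_lhs => rw [← b.sum_repr ξ]
      rw [map_sum]; simp [Module.Basis.coord]
    rw [h2]
    simp [hf, map_smul]
  obtain ⟨μ', h1, h2⟩ := havg μ0 key
  exact ⟨μ', h1, h2⟩
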